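/- An ideal I on κ has the approximation property if and only if I admits a basis of cardinality at most κ. -/

import Mathlib

open Set Cardinal TopologicalSpace

/-- A κ-complete proper ideal on κ extending the ideal of bounded sets. -/
structure IsGoodIdeal (κ : Type) [LinearOrder κ] (I : Set (Set κ)) : Prop where
  lower : ∀ ⦃A B : Set κ⦄, A ⊆ B → B ∈ I → A ∈ I
  complete : ∀ J : Set (Set κ), J ⊆ I → #J < #κ → ⋃₀ J ∈ I
  proper : (Set.univ : Set κ) ∉ I
  bounded_mem : ∀ s : Set κ, Set.Bounded (· < ·) s → s ∈ I

/-- The basic cone `N_f` determined by the restriction of `f` to `D`. -/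
def cone {κ ν : Type} (D : Set κ) (f : κ → ν) : Set (κ → ν) :=
  {x | ∀ α ∈ D, x α = f α}

/-- The ideal topology `τ_I` on `ν^κ`. -/
def idealTop {κ : Type} (I : Set (Set κ)) (ν : Type) : TopologicalSpace (κ → ν) :=
  TopologicalSpace.generateFrom {S | ∃ D ∈ I, ∃ f : κ → ν, S = cone D f}

/-- The bounded topology `τ_b` on `ν^κ`. -/
def boundedTop (κ ν : Type) [LinearOrder κ] : TopologicalSpace (κ → ν) :=
  TopologicalSpace.generateFrom
    {S | ∃ D : Set κ, Set.Bounded (· < ·) D ∧ ∃ f : κ → ν, S = cone D f}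

section AuxStmt1

variable {κ : Type} [LinearOrder κ] [IsWellOrder κ (· < ·)]

private lemma exists_fix_aux [Nonempty κ]
    (T : (κ → κ) → κ → Set κ)
    (hT : ∀ p q α, (∀ β < α, p β = q β) → T p α = T q α)
    (hne : ∀ p α, ((T p α)ᶜ).Nonempty) :
    ∃ p : κ → κ, ∀ α, p α ∉ T p α := by
  classical
  have wf : WellFounded ((· < ·) : κ → κ → Prop) := IsWellFounded.wf
  refine ⟨wf.fix (fun α ih =>
    (hne (fun β => if h : β < α then ih β h else Classical.arbitrary κ) α).some), fun α => ?_⟩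
  set p := wf.fix (fun α ih =>
    (hne (fun β => if h : β < α then ih β h else Classical.arbitrary κ) α).some) with hpdef
  have heq : p α = (hne (fun β => if h : β < α then p β else Classical.arbitrary κ) α).some := by
    conv_lhs => rw [hpdef, wf.fix_eq]
  have hmem := (hne (fun β => if h : β < α then p β else Classical.arbitrary κ) α).some_mem
  have hT' := hT (fun β => if h : β < α then p β else Classical.arbitrary κ) p α
    (fun β hβ => dif_pos hβ)
  rw [heq, ← hT']
  exact hmem

private lemma seg_lt (htype : Ordinal.type ((· < ·) : κ → κ → Prop) = (#κ).ord) (α : κ) :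
    #{β : κ // β < α} < #κ := by
  rw [← Ordinal.card_typein (r := (· < ·))]
  exact Cardinal.lt_ord.mp (htype ▸ Ordinal.typein_lt_type _ α)

private lemma no_max (htype : Ordinal.type ((· < ·) : κ → κ → Prop) = (#κ).ord)
    (hunc : ℵ₀ < #κ) (β : κ) : ∃ γ : κ, β < γ := by
  have hlim : Order.IsSuccLimit ((#κ).ord) := Cardinal.isSuccLimit_ord hunc.le
  have h1 : Ordinal.typein ((· < ·) : κ → κ → Prop) β < Ordinal.type ((· < ·) : κ → κ → Prop) :=
    Ordinal.typein_lt_type _ β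
  have h2 : Order.succ (Ordinal.typein ((· < ·) : κ → κ → Prop) β) <
      Ordinal.type ((· < ·) : κ → κ → Prop) := by
    rw [htype] at h1 ⊢
    exact hlim.succ_lt h1
  refine ⟨Ordinal.enum ((· < ·) : κ → κ → Prop) ⟨Order.succ (Ordinal.typein ((· < ·) : κ → κ → Prop) β), h2⟩, ?_⟩
  rw [← Ordinal.typein_lt_typein ((· < ·) : κ → κ → Prop), Ordinal.typein_enum]
  exact Order.lt_succ _

end AuxStmt1

/-- the approximation property holds iff `I` has a basis of cardinality at
most `κ`. -/
theorem stmt_1 (κ : Type) [LinearOrder κ] [IsWellOrder κ (· < ·)]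
    (htype : Ordinal.type ((· < ·) : κ → κ → Prop) = (#κ).ord)
    (hreg : (#κ).IsRegular) (hunc : ℵ₀ < #κ)
    (I : Set (Set κ)) (hI : IsGoodIdeal κ I) :
    (∃ B : κ → Set κ,
        (∀ α, B α ∈ I) ∧
        (∀ ⦃α β : κ⦄, α < β → B α ⊂ B β) ∧
        (∀ α : κ, ((∃ β, β < α) ∧ ∀ β < α, ∃ γ, β < γ ∧ γ < α) →
          B α = ⋃ β < α, B β) ∧
        (∀ α : κ, IsMin α → B α = ∅) ∧
        (∀ A ∈ I, ∃ α : κ, A ⊂ B α)) ↔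
    (∃ B : Set (Set κ), B ⊆ I ∧ #↥B ≤ #κ ∧ ∀ A ∈ I, ∃ D ∈ B, A ⊆ D) := by
  classical
  constructor
  · rintro ⟨B, hBI, -, -, -, hcov⟩
    refine ⟨Set.range B, ?_, Cardinal.mk_range_le, fun A hA => ?_⟩
    · rintro _ ⟨α, rfl⟩; exact hBI α
    · obtain ⟨α, hα⟩ := hcov A hA
      exact ⟨B α, Set.mem_range_self α, hα.subset⟩
  · rintro ⟨Bs, hBsI, hcard, hBscov⟩
    have hne : Nonempty κ := by
      rw [← Cardinal.mk_ne_zero_iff]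
      exact (Cardinal.aleph0_pos.trans hunc).ne'
    -- basic closure properties of I
    have hIio : ∀ α : κ, {γ : κ | γ < α} ∈ I :=
      fun α => hI.bounded_mem _ ⟨α, fun x hx => hx⟩
    have hnomax := no_max htype hunc
    have hsing : ∀ x : κ, ({x} : Set κ) ∈ I := by
      intro x
      obtain ⟨y, hy⟩ := hnomax x
      refine hI.bounded_mem _ ⟨y, ?_⟩
      rintro z rfl
      exact hy
    have hempty : (∅ : Set κ) ∈ I :=
      hI.lower (Set.empty_subset _) (hIio (Classical.arbitrary κ))
    have hunion : ∀ {A C : Set κ}, A ∈ I → C ∈ I → A ∪ C ∈ I := by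
      intro A C hA hC
      have h2 : #({A, C} : Set (Set κ)) < #κ :=
        lt_trans (((Set.finite_singleton C).insert A).lt_aleph0) hunc
      have := hI.complete {A, C} (by rintro X (rfl | rfl) <;> assumption) h2
      rwa [Set.sUnion_pair] at this
    -- a surjective-enough enumeration of the basis
    obtain ⟨g⟩ := (Cardinal.le_def _ _).mp hcard
    set f : κ → Set κ := fun x =>
      if h : ∃ b : ↥Bs, g b = x then (h.choose : Set κ) else ∅ with hfdef
    have hfI : ∀ x, f x ∈ I := by
      intro x
      rw [hfdef]
      dsimp only
      split_ifs with h
      · exact hBsI h.choose.2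
      · exact hempty
    have hfcov : ∀ A ∈ I, ∃ x, A ⊆ f x := by
      intro A hA
      obtain ⟨D, hD, hAD⟩ := hBscov A hA
      refine ⟨g ⟨D, hD⟩, ?_⟩
      have h : ∃ b : ↥Bs, g b = g ⟨D, hD⟩ := ⟨⟨D, hD⟩, rfl⟩
      have : f (g ⟨D, hD⟩) = D := by
        rw [hfdef]
        dsimp only
        rw [dif_pos h, g.injective h.choose_spec]
      rw [this]
      exact hAD
    -- the diagonal sequence
    set T : (κ → κ) → κ → Set κ :=
      fun p α => {γ : κ | γ < α} ∪ ⋃ β < α, (f β ∪ {p β}) with hTdef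
    have hTcongr : ∀ p q α, (∀ β < α, p β = q β) → T p α = T q α := by
      intro p q α h
      rw [hTdef]
      dsimp only
      congr 1
      exact Set.iUnion_congr fun β => Set.iUnion_congr fun hβ => by rw [h β hβ]
    have hTI : ∀ p α, T p α ∈ I := by
      intro p α
      refine hunion (hIio α) ?_
      show (⋃ β ∈ {β : κ | β < α}, (f β ∪ {p β})) ∈ I
      rw [← Set.sUnion_image]
      refine hI.complete _ ?_ ?_
      · rintro X ⟨β, hβ, rfl⟩
        exact hunion (hfI β) (hsing (p β))
      · exact lt_of_le_of_lt Cardinal.mk_image_le (seg_lt htype α)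
    have hTne : ∀ p α, ((T p α)ᶜ).Nonempty := by
      intro p α
      by_contra h
      rw [Set.not_nonempty_iff_eq_empty, Set.compl_empty_iff] at h
      exact hI.proper (h ▸ hTI p α)
    obtain ⟨p, hp⟩ := exists_fix_aux T hTcongr hTne
    refine ⟨fun α => T p α, hTI p, ?_, ?_, ?_, ?_⟩
    · -- strictly increasing
      intro α β hαβ
      constructor
      · rw [hTdef]
        dsimp only
        refine Set.union_subset_union (fun γ hγ => lt_trans hγ hαβ) ?_
        refine Set.iUnion₂_subset fun δ hδ => ?_
        exact fun x hx => Set.mem_iUnion₂.mpr ⟨δ, hδ.trans hαβ, hx⟩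
      · intro hsub
        apply hp α
        apply hsub
        rw [hTdef]
        dsimp only
        refine Set.mem_union_right _ ?_
        refine Set.mem_iUnion₂.mpr ⟨α, hαβ, ?_⟩
        exact Set.mem_union_right _ rfl
    · -- continuity at limits
      rintro α ⟨-, hdense⟩
      apply Set.Subset.antisymm
      · rw [hTdef]
        dsimp only
        rintro x (hx | hx)
        · obtain ⟨γ, hxγ, hγα⟩ := hdense x hx
          exact Set.mem_iUnion₂.mpr ⟨γ, hγα, Set.mem_union_left _ hxγ⟩
        · obtain ⟨β, hβα, hxβ⟩ := Set.mem_iUnion₂.mp hx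
          obtain ⟨γ, hβγ, hγα⟩ := hdense β hβα
          refine Set.mem_iUnion₂.mpr ⟨γ, hγα, Set.mem_union_right _ ?_⟩
          exact Set.mem_iUnion₂.mpr ⟨β, hβγ, hxβ⟩
      · refine Set.iUnion₂_subset fun β hβα => ?_
        rw [hTdef]
        dsimp only
        refine Set.union_subset_union (fun γ hγ => lt_trans hγ hβα) ?_
        refine Set.iUnion₂_subset fun δ hδ => ?_
        exact fun x hx => Set.mem_iUnion₂.mpr ⟨δ, hδ.trans hβα, hx⟩
    · -- minimum
      intro α hα
      rw [hTdef]
      dsimp only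
      refine Set.eq_empty_iff_forall_notMem.mpr fun x hx => ?_
      rcases hx with hx | hx
      · exact hα.not_lt hx
      · obtain ⟨β, hβα, -⟩ := Set.mem_iUnion₂.mp hx
        exact hα.not_lt hβα
    · -- covering
      intro A hA
      obtain ⟨β, hAβ⟩ := hfcov A hA
      obtain ⟨γ, hβγ⟩ := hnomax β
      obtain ⟨α, hγα⟩ := hnomax γ
      refine ⟨α, ?_, ?_⟩
      · refine hAβ.trans ?_
        rw [hTdef]
        dsimp only
        exact fun x hx => Set.mem_union_right _
          (Set.mem_iUnion₂.mpr ⟨β, lt_trans hβγ hγα, Set.mem_union_left _ hx⟩)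
      · intro hsub
        have hpγA : p γ ∈ A := by
          apply hsub
          rw [hTdef]
          dsimp only
          refine Set.mem_union_right _ ?_
          exact Set.mem_iUnion₂.mpr ⟨γ, hγα, Set.mem_union_right _ rfl⟩
        apply hp γ
        rw [hTdef]
        dsimp only
        refine Set.mem_union_right _ ?_
        exact Set.mem_iUnion₂.mpr ⟨β, hβγ, Set.mem_union_left _ (hAβ hpγA)⟩
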